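/- Let (U_x)_j = minmod(θ(ū_j − ū_{j−1})/Δx, (ū_{j+1} − ū_{j−1})/(2Δx), θ(ū_{j+1} − ū_j)/Δx) with θ ∈ [1,2] and Δx > 0. Then the reconstructed interface values u^-_{j+1/2} = ū_j + (Δx/2)(U_x)_j and u^+_{j−1/2} = ū_j − (Δx/2)(U_x)_j lie between the neighboring cell averages: if ū_{j−1} ≤ ū_j ≤ ū_{j+1} then ū_j ≤ u^-_{j+1/2} ≤ ū_{j+1} and ū_{j−1} ≤ u^+_{j−1/2} ≤ ū_j, provided θ ≤ 2. -/
import Mathlib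


/-- The three-argument minmod limiter. -/
noncomputable def minmod3 (z₁ z₂ z₃ : ℝ) : ℝ :=
  if 0 < z₁ ∧ 0 < z₂ ∧ 0 < z₃ then min z₁ (min z₂ z₃)
  else if z₁ < 0 ∧ z₂ < 0 ∧ z₃ < 0 then max z₁ (max z₂ z₃)
  else 0

/-- Minmod reconstruction is bounded by the neighboring cell averages for
monotone data. -/
theorem minmod_reconstruction_bounds (uL uC uR Δx θ s : ℝ)
    (hΔx : 0 < Δx) (hθ1 : 1 ≤ θ) (hθ2 : θ ≤ 2)
    (hs : s = minmod3 (θ * (uC - uL) / Δx) ((uR - uL) / (2 * Δx))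
      (θ * (uR - uC) / Δx))
    (hmono1 : uL ≤ uC) (hmono2 : uC ≤ uR) :
    (uC ≤ uC + Δx / 2 * s ∧ uC + Δx / 2 * s ≤ uR) ∧
      (uL ≤ uC - Δx / 2 * s ∧ uC - Δx / 2 * s ≤ uC) := by
  have hθ0 : 0 < θ := by linarith
  set z₁ := θ * (uC - uL) / Δx with hz1
  set z₂ := (uR - uL) / (2 * Δx) with hz2
  set z₃ := θ * (uR - uC) / Δx with hz3
  have hz1n : 0 ≤ z₁ := div_nonneg (mul_nonneg hθ0.le (by linarith)) hΔx.le
  have hz2n : 0 ≤ z₂ := div_nonneg (by linarith) (by linarith)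
  have hz3n : 0 ≤ z₃ := div_nonneg (mul_nonneg hθ0.le (by linarith)) hΔx.le
  rw [minmod3] at hs
  by_cases hpos : 0 < z₁ ∧ 0 < z₂ ∧ 0 < z₃
  · rw [if_pos hpos] at hs
    have hs0 : 0 ≤ s := by
      rw [hs]; exact le_min hpos.1.le (le_min hpos.2.1.le hpos.2.2.le)
    have hsz1 : s ≤ z₁ := hs ▸ min_le_left _ _
    have hsz3 : s ≤ z₃ := hs ▸ (min_le_right _ _).trans (min_le_right _ _)
    have hz3' : z₃ * Δx = θ * (uR - uC) := by rw [hz3]; field_simp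
    have hz1' : z₁ * Δx = θ * (uC - uL) := by rw [hz1]; field_simp
    have key1 : Δx / 2 * s ≤ uR - uC := by
      nlinarith [mul_le_mul_of_nonneg_left hsz3 hΔx.le]
    have key2 : Δx / 2 * s ≤ uC - uL := by
      nlinarith [mul_le_mul_of_nonneg_left hsz1 hΔx.le]
    have hΔs : 0 ≤ Δx / 2 * s := by positivity
    refine ⟨⟨by linarith, by linarith⟩, ⟨by linarith, by linarith⟩⟩
  · rw [if_neg hpos, if_neg (by push_neg; intro h; linarith)] at hs
    simp [hs]; constructor <;> linarith
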